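/- Let D and D' be division rings, m, n, m', n' ≥ 2, and let φ: D^{m×n} → D'^{m'×n'} be a non-degenerate graph homomorphism with φ(0) = 0. Suppose M is a maximal set of type one (resp. type two) containing 0 in D^{m×n} and φ(M) ⊆ M' for some maximal set M' in D'^{m'×n'}. Then for any A ∈ M there exists a maximal set R of type one (resp. type two) in D^{m×n} such that R ∩ M = {A} and φ(R) ⊆ R' for some maximal set R' in D'^{m'×n'} with R' ≠ M' and R' of the same type as M'. -/

import Mathlib

open Matrix

/-- Rank of a matrix over a division ring: dimension of the left row space. -/
noncomputable def mrank {D : Type} [DivisionRing D] {m n : ℕ} (A : Matrix (Fin m) (Fin n) D) : ℕ :=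
  Module.finrank D (Submodule.span D (Set.range fun i : Fin m => fun j : Fin n => A i j))

/-- The standard maximal set of type one: matrices whose rows other than the first are zero. -/
def M1set (D : Type) [DivisionRing D] (m n : ℕ) : Set (Matrix (Fin m) (Fin n) D) :=
  {X | ∀ i j, i.val ≠ 0 → X i j = 0}

/-- The standard maximal set of type two: matrices whose columns other than the first are zero. -/
def N1set (D : Type) [DivisionRing D] (m n : ℕ) : Set (Matrix (Fin m) (Fin n) D) :=
  {X | ∀ i j, j.val ≠ 0 → X i j = 0}

/-- A maximal set of type one: a set of the form `P·M₁ + A` with `P` invertible. -/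
def IsTypeOne {D : Type} [DivisionRing D] {m n : ℕ} (S : Set (Matrix (Fin m) (Fin n) D)) : Prop :=
  ∃ P : Matrix (Fin m) (Fin m) D, ∃ A : Matrix (Fin m) (Fin n) D,
    IsUnit P ∧ S = (fun X => P * X + A) '' M1set D m n

/-- A maximal set of type two: a set of the form `N₁·Q + A` with `Q` invertible. -/
def IsTypeTwo {D : Type} [DivisionRing D] {m n : ℕ} (S : Set (Matrix (Fin m) (Fin n) D)) : Prop :=
  ∃ Q : Matrix (Fin n) (Fin n) D, ∃ A : Matrix (Fin m) (Fin n) D,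
    IsUnit Q ∧ S = (fun X => X * Q + A) '' N1set D m n

/-- A maximal set (maximal clique of the adjacency graph): of type one or type two. -/
def IsMaximalSet {D : Type} [DivisionRing D] {m n : ℕ}
    (S : Set (Matrix (Fin m) (Fin n) D)) : Prop :=
  IsTypeOne S ∨ IsTypeTwo S

/-- A graph homomorphism `φ` is degenerate if there is a matrix `A` of rank at most one and two
maximal sets of different types `Ms`, `Ns` in the target with `φ A ∈ Ms ∩ Ns` and the image of
the unit ball around `A` contained in `Ms ∪ Ns`. -/
def Degenerate {D D' : Type} [DivisionRing D] [DivisionRing D'] {m n m' n' : ℕ}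
    (φ : Matrix (Fin m) (Fin n) D → Matrix (Fin m') (Fin n') D') : Prop :=
  ∃ A : Matrix (Fin m) (Fin n) D, mrank A ≤ 1 ∧
    ∃ Ms Ns : Set (Matrix (Fin m') (Fin n') D'),
      IsTypeOne Ms ∧ IsTypeTwo Ns ∧ φ A ∈ Ms ∩ Ns ∧
      φ '' {X | mrank (X - A) ≤ 1} ⊆ Ms ∪ Ns


section Aux
variable {D : Type} [DivisionRing D] {m n : ℕ}
variable {D : Type} [DivisionRing D] {m n : ℕ}

lemma mrank_eq_zero_iff {X : Matrix (Fin m) (Fin n) D} : mrank X = 0 ↔ X = 0 := by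
  unfold mrank
  rw [Submodule.finrank_eq_zero, Submodule.span_eq_bot]
  constructor
  · intro h; ext i j
    have := h (fun j => X i j) ⟨i, rfl⟩
    exact congrFun this j
  · rintro rfl x ⟨i, rfl⟩; rfl

lemma mrank_le_one_iff {X : Matrix (Fin m) (Fin n) D} :
    mrank X ≤ 1 ↔ ∃ (c : Fin m → D) (r : Fin n → D), X = vecMulVec c r := by
  constructor
  · intro h
    by_cases hz : X = 0
    · exact ⟨0, 0, by ext i j; simp [hz, vecMulVec]⟩
    · have : ∃ i₀, (fun j => X i₀ j) ≠ 0 := by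
        by_contra hc; push_neg at hc
        apply hz; ext i j; exact congrFun (hc i) j
      obtain ⟨i₀, hi₀⟩ := this
      have key : ∀ i, ∃ a : D, (fun j => X i j) = a • (fun j => X i₀ j) := by
        intro i
        by_contra hc; push_neg at hc
        have hind : LinearIndependent D ![(fun j => X i j), (fun j => X i₀ j)] := by
          rw [linearIndependent_fin2]
          refine ⟨by simpa using hi₀, fun a => ?_⟩
          intro he
          exact hc a he.symm
        have h2 : Module.finrank D (Submodule.span D
            (Set.range ![(fun j => X i j), (fun j => X i₀ j)])) = 2 := by
          rw [finrank_span_eq_card hind]; simp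
        have hle : Submodule.span D (Set.range ![(fun j => X i j), (fun j => X i₀ j)]) ≤
            Submodule.span D (Set.range fun i : Fin m => fun j : Fin n => X i j) := by
          apply Submodule.span_le.2
          rintro x ⟨k, rfl⟩
          fin_cases k
          · exact Submodule.subset_span ⟨i, rfl⟩
          · exact Submodule.subset_span ⟨i₀, rfl⟩
        have := Submodule.finrank_mono hle
        rw [h2] at this
        unfold mrank at h
        omega
      choose c hc using key
      exact ⟨c, fun j => X i₀ j, by ext i j; exact congrFun (hc i) j⟩
  · rintro ⟨c, r, rfl⟩
    unfold mrank
    have hle : Submodule.span D (Set.range fun i : Fin m => fun j : Fin n => vecMulVec c r i j) ≤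
        Submodule.span D {r} := by
      apply Submodule.span_le.2
      rintro x ⟨i, rfl⟩
      exact Submodule.mem_span_singleton.2 ⟨c i, by ext j; simp [vecMulVec, Pi.smul_apply, smul_eq_mul]⟩
    calc Module.finrank D _ ≤ Module.finrank D (Submodule.span D {r}) := Submodule.finrank_mono hle
      _ ≤ 1 := by
        by_cases hr : r = 0
        · subst hr
          rw [Submodule.span_zero_singleton]
          simp
        · rw [finrank_span_singleton hr]

lemma vecMulVec_eq_zero_iff {c : Fin m → D} {r : Fin n → D} :
    vecMulVec c r = 0 ↔ c = 0 ∨ r = 0 := by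
  constructor
  · intro h
    by_contra hc; push_neg at hc
    obtain ⟨h1, h2⟩ := hc
    obtain ⟨i, hi⟩ := Function.ne_iff.1 h1
    obtain ⟨j, hj⟩ := Function.ne_iff.1 h2
    have := congrFun (congrFun h i) j
    simp [vecMulVec] at this
    rcases this with h | h
    exacts [hi h, hj h]
  · rintro (rfl | rfl) <;> ext i j <;> simp [vecMulVec]

lemma mrank_vecMulVec {c : Fin m → D} {r : Fin n → D} (hc : c ≠ 0) (hr : r ≠ 0) :
    mrank (vecMulVec c r) = 1 := by
  have h1 : mrank (vecMulVec c r) ≤ 1 := mrank_le_one_iff.2 ⟨c, r, rfl⟩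
  have h0 : mrank (vecMulVec c r) ≠ 0 := by
    rw [Ne, mrank_eq_zero_iff, vecMulVec_eq_zero_iff]
    tauto
  omega

lemma mrank_eq_one_iff {X : Matrix (Fin m) (Fin n) D} :
    mrank X = 1 ↔ ∃ (c : Fin m → D) (r : Fin n → D), c ≠ 0 ∧ r ≠ 0 ∧ X = vecMulVec c r := by
  constructor
  · intro h
    obtain ⟨c, r, rfl⟩ := mrank_le_one_iff.1 h.le
    have : vecMulVec c r ≠ 0 := by
      intro hz; rw [hz, mrank_eq_zero_iff.2 rfl] at h; omega
    rw [Ne, vecMulVec_eq_zero_iff] at this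
    push_neg at this
    exact ⟨c, r, this.1, this.2, rfl⟩
  · rintro ⟨c, r, hc, hr, rfl⟩
    exact mrank_vecMulVec hc hr



def MS (c : Fin m → D) (A : Matrix (Fin m) (Fin n) D) : Set (Matrix (Fin m) (Fin n) D) :=
  {X | ∃ r : Fin n → D, X = vecMulVec c r + A}

def NS (r : Fin n → D) (A : Matrix (Fin m) (Fin n) D) : Set (Matrix (Fin m) (Fin n) D) :=
  {X | ∃ d : Fin m → D, X = vecMulVec d r + A}

lemma vmv_apply (c : Fin m → D) (r : Fin n → D) (i j) : vecMulVec c r i j = c i * r j := rfl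

variable {A X Y : Matrix (Fin m) (Fin n) D} {c c' : Fin m → D} {r r' : Fin n → D}

lemma mem_MS_self (c : Fin m → D) (A : Matrix (Fin m) (Fin n) D) : A ∈ MS c A :=
  ⟨0, by ext i j; simp [vmv_apply]⟩

lemma mem_NS_self (r : Fin n → D) (A : Matrix (Fin m) (Fin n) D) : A ∈ NS r A :=
  ⟨0, by ext i j; simp [vmv_apply]⟩

lemma MS_diff (hX : X ∈ MS c A) (hY : Y ∈ MS c A) :
    ∃ s, X - Y = vecMulVec c s := by
  obtain ⟨r1, rfl⟩ := hX; obtain ⟨r2, rfl⟩ := hY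
  exact ⟨r1 - r2, by ext i j; simp [vmv_apply, mul_sub]⟩

lemma NS_diff (hX : X ∈ NS r A) (hY : Y ∈ NS r A) :
    ∃ d, X - Y = vecMulVec d r := by
  obtain ⟨d1, rfl⟩ := hX; obtain ⟨d2, rfl⟩ := hY
  exact ⟨d1 - d2, by ext i j; simp [vmv_apply, sub_mul]⟩

lemma MS_mem_iff_diff : X ∈ MS c A ↔ ∃ s, X - A = vecMulVec c s := by
  constructor
  · rintro ⟨r, rfl⟩; exact ⟨r, by abel⟩
  · rintro ⟨s, h⟩; exact ⟨s, by rw [← h]; abel⟩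

lemma NS_mem_iff_diff : X ∈ NS r A ↔ ∃ d, X - A = vecMulVec d r := by
  constructor
  · rintro ⟨d, rfl⟩; exact ⟨d, by abel⟩
  · rintro ⟨d, h⟩; exact ⟨d, by rw [← h]; abel⟩

lemma MS_eq_of_mem (hX : X ∈ MS c A) : MS c X = MS c A := by
  obtain ⟨r0, rfl⟩ := hX
  ext Y; constructor
  · rintro ⟨r, rfl⟩
    refine ⟨r + r0, ?_⟩
    ext i j; simp only [Matrix.add_apply, vmv_apply, mul_add, Pi.add_apply, Pi.sub_apply]; abel
  · rintro ⟨r, rfl⟩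
    refine ⟨r - r0, ?_⟩
    ext i j; simp only [Matrix.add_apply, vmv_apply, mul_sub, Pi.add_apply, Pi.sub_apply]; abel

lemma NS_eq_of_mem (hX : X ∈ NS r A) : NS r X = NS r A := by
  obtain ⟨d0, rfl⟩ := hX
  ext Y; constructor
  · rintro ⟨d, rfl⟩
    refine ⟨d + d0, ?_⟩
    ext i j; simp only [Matrix.add_apply, vmv_apply, add_mul, Pi.add_apply, Pi.sub_apply]; abel
  · rintro ⟨d, rfl⟩
    refine ⟨d - d0, ?_⟩
    ext i j; simp only [Matrix.add_apply, vmv_apply, sub_mul, Pi.add_apply, Pi.sub_apply]; abel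

/-- right-scaling invariance of MS -/
lemma MS_scale {lam : D} (hlam : lam ≠ 0) (A : Matrix (Fin m) (Fin n) D) :
    MS (fun i => c i * lam) A = MS c A := by
  ext Y; constructor
  · rintro ⟨r, rfl⟩
    refine ⟨fun j => lam * r j, ?_⟩
    ext i j; simp [Matrix.add_apply, vmv_apply, mul_assoc]
  · rintro ⟨r, rfl⟩
    refine ⟨fun j => lam⁻¹ * r j, ?_⟩
    ext i j
    simp only [Matrix.add_apply, vmv_apply]
    rw [mul_assoc, mul_inv_cancel_left₀ hlam]

lemma NS_scale {mu : D} (hmu : mu ≠ 0) (A : Matrix (Fin m) (Fin n) D) :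
    NS (mu • r) A = NS r A := by
  ext Y; constructor
  · rintro ⟨d, rfl⟩
    refine ⟨fun i => d i * mu, ?_⟩
    ext i j; simp [Matrix.add_apply, vmv_apply, Pi.smul_apply, smul_eq_mul, mul_assoc]
  · rintro ⟨d, rfl⟩
    refine ⟨fun i => d i * mu⁻¹, ?_⟩
    ext i j
    simp only [Matrix.add_apply, vmv_apply, Pi.smul_apply, smul_eq_mul]
    rw [mul_assoc, inv_mul_cancel_left₀ hmu]

/-- If `c'⊗s' = c⊗u` and `s' ≠ 0`, then `c'` is a right multiple of `c`. -/
lemma propL {s' u : Fin n → D} (h : vecMulVec c' s' = vecMulVec c u)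
    (hs : s' ≠ 0) : ∃ lam : D, c' = fun i => c i * lam := by
  obtain ⟨j, hj⟩ := Function.ne_iff.1 hs
  refine ⟨u j * (s' j)⁻¹, funext fun i => ?_⟩
  have := congrFun (congrFun h i) j
  rw [vmv_apply, vmv_apply] at this
  rw [← mul_assoc, ← this, mul_assoc, mul_inv_cancel₀ hj, mul_one]

/-- If `d⊗s = d'⊗u` and `d ≠ 0`, then `s` is a left multiple of `u`. -/
lemma propR {d d' : Fin m → D} {s u : Fin n → D} (h : vecMulVec d s = vecMulVec d' u)
    (hd : d ≠ 0) : ∃ mu : D, s = mu • u := by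
  obtain ⟨i, hi⟩ := Function.ne_iff.1 hd
  refine ⟨(d i)⁻¹ * d' i, funext fun j => ?_⟩
  have := congrFun (congrFun h i) j
  rw [vmv_apply, vmv_apply] at this
  simp only [Pi.smul_apply, smul_eq_mul]
  rw [mul_assoc, ← this, ← mul_assoc, inv_mul_cancel₀ hi, one_mul]

lemma vmv_ne_zero {s : Fin n → D} (hc : c ≠ 0) (hs : s ≠ 0) : vecMulVec c s ≠ 0 := by
  intro h
  obtain ⟨i, hi⟩ := Function.ne_iff.1 hc
  obtain ⟨j, hj⟩ := Function.ne_iff.1 hs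
  have := congrFun (congrFun h i) j
  rw [vmv_apply] at this
  simp at this
  tauto

lemma vmv_add_ne {s : Fin n → D} (hc : c ≠ 0) (hs : s ≠ 0) : vecMulVec c s + A ≠ A := by
  intro h
  apply vmv_ne_zero hc hs (c := c)
  have := congrArg (· - A) h
  simpa using this


end Aux
section Aux2
variable {D : Type} [DivisionRing D] {m n p : ℕ}

lemma vmv_mul_left (a : Fin m → D) (b c : Fin n → D) (d : Fin p → D) :
    vecMulVec a b * vecMulVec c d = vecMulVec (fun i => a i * (b ⬝ᵥ c)) d := by
  ext i j
  simp only [Matrix.mul_apply, vmv_apply, dotProduct]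
  rw [Finset.mul_sum, Finset.sum_mul]
  congr 1; funext k
  noncomm_ring

lemma vmv_mul_right (a : Fin m → D) (b c : Fin n → D) (d : Fin p → D) :
    vecMulVec a b * vecMulVec c d = vecMulVec a (fun j => (b ⬝ᵥ c) * d j) := by
  rw [vmv_mul_left]; ext i j; simp only [vmv_apply, mul_assoc]

lemma vmv_add_left (u v : Fin m → D) (e : Fin n → D) :
    vecMulVec (u + v) e = vecMulVec u e + vecMulVec v e := by
  ext i j; simp [vmv_apply, add_mul]

lemma vmv_add_right (u : Fin m → D) (e f : Fin n → D) :
    vecMulVec u (e + f) = vecMulVec u e + vecMulVec u f := by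
  ext i j; simp [vmv_apply, mul_add]

lemma unit_one_add_col {z : Fin m} {u : Fin m → D} (h : (1 : D) + u z ≠ 0) :
    IsUnit (1 + vecMulVec u (Pi.single z 1) : Matrix (Fin m) (Fin m) D) := by
  set t := (1 + u z)⁻¹ with ht
  set v : Fin m → D := fun i => -(u i * t) with hv
  have hdot : ∀ w : Fin m → D, (Pi.single z 1 : Fin m → D) ⬝ᵥ w = w z := by
    intro w; simp [dotProduct, Pi.single_apply]
  have expand : ∀ a b : Fin m → D,
      (1 + vecMulVec a (Pi.single z 1)) * (1 + vecMulVec b (Pi.single z 1)) =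
      1 + vecMulVec (a + b + fun i => a i * b z) (Pi.single z 1) := by
    intro a b
    rw [add_mul, mul_add, mul_add, one_mul, mul_one, vmv_mul_left, hdot]
    rw [vmv_add_left, vmv_add_left]
    simp only [one_mul]
    abel
  have key1 : (u + v + fun i => u i * v z) = 0 := by
    funext i
    simp only [Pi.add_apply, hv, Pi.zero_apply]
    have e : u i * ((1:D) - (1 + u z) * t) = u i + -(u i * t) + -(u i * (u z * t)) := by
      rw [mul_sub, mul_one, add_mul, one_mul, mul_add]
      abel
    rw [mul_neg, ← e, ht, mul_inv_cancel₀ h, sub_self, mul_zero]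
  have key2 : (v + u + fun i => v i * u z) = 0 := by
    funext i
    simp only [Pi.add_apply, hv, Pi.zero_apply]
    have e2 : u i * ((1:D) - t * (1 + u z)) = -(u i * t) + u i + -(u i * (t * u z)) := by
      rw [mul_sub, mul_one, mul_add, mul_one, mul_add]
      abel
    rw [neg_mul, mul_assoc, ← e2, ht, inv_mul_cancel₀ h, sub_self, mul_zero]
  refine ⟨⟨_, 1 + vecMulVec v (Pi.single z 1), ?_, ?_⟩, rfl⟩
  · rw [expand, key1]
    ext i j; simp [vmv_apply]
  · rw [expand, key2]
    ext i j; simp [vmv_apply]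

lemma unit_one_add_row {z : Fin n} {w : Fin n → D} (h : (1 : D) + w z ≠ 0) :
    IsUnit (1 + vecMulVec (Pi.single z 1) w : Matrix (Fin n) (Fin n) D) := by
  set t := (1 + w z)⁻¹ with ht
  set v : Fin n → D := fun j => -(t * w j) with hv
  have hdot : ∀ a : Fin n → D, a ⬝ᵥ (Pi.single z 1 : Fin n → D) = a z := by
    intro a; simp [dotProduct, Pi.single_apply]
  have expand : ∀ a b : Fin n → D,
      (1 + vecMulVec (Pi.single z 1) a) * (1 + vecMulVec (Pi.single z 1) b) =
      1 + vecMulVec (Pi.single z 1) (a + b + fun j => a z * b j) := by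
    intro a b
    rw [add_mul, mul_add, mul_add, one_mul, mul_one, vmv_mul_right, hdot]
    rw [vmv_add_right, vmv_add_right]
    simp only [one_mul]
    abel
  have key1 : (w + v + fun j => w z * v j) = 0 := by
    funext j
    simp only [Pi.add_apply, hv, Pi.zero_apply]
    have e : ((1:D) - (1 + w z) * t) * w j = w j + -(t * w j) + -(w z * (t * w j)) := by
      rw [sub_mul, one_mul, add_mul, one_mul, add_mul, mul_assoc]
      abel
    rw [mul_neg, ← e, ht, mul_inv_cancel₀ h, sub_self, zero_mul]
  have key2 : (v + w + fun j => v z * w j) = 0 := by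
    funext j
    simp only [Pi.add_apply, hv, Pi.zero_apply]
    have e2 : ((1:D) - t * (1 + w z)) * w j = -(t * w j) + w j + -(t * (w z * w j)) := by
      rw [sub_mul, one_mul, mul_add, mul_one, add_mul, mul_assoc]
      abel
    rw [neg_mul, mul_assoc, ← e2, ht, inv_mul_cancel₀ h, sub_self, zero_mul]
  refine ⟨⟨_, 1 + vecMulVec (Pi.single z 1) v, ?_, ?_⟩, rfl⟩
  · rw [expand, key1]
    ext i j; simp [vmv_apply]
  · rw [expand, key2]
    ext i j; simp [vmv_apply]

def SW (σ : Equiv.Perm (Fin m)) : Matrix (Fin m) (Fin m) D :=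
  Matrix.of fun i j => if j = σ i then 1 else 0

lemma SW_mul_SW {σ : Equiv.Perm (Fin m)} (hσ : ∀ x, σ (σ x) = x) :
    (SW σ : Matrix (Fin m) (Fin m) D) * SW σ = 1 := by
  ext i j
  simp only [Matrix.mul_apply, SW, Matrix.of_apply, ite_mul, one_mul, zero_mul]
  rw [Finset.sum_eq_single (σ i)]
  · simp [hσ i, Matrix.one_apply, eq_comm]
  · intro k _ hk; rw [if_neg (fun hh => hk hh)]
  · intro hmem; exact absurd (Finset.mem_univ _) hmem

lemma SW_unit {σ : Equiv.Perm (Fin m)} (hσ : ∀ x, σ (σ x) = x) :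
    IsUnit (SW σ : Matrix (Fin m) (Fin m) D) :=
  ⟨⟨SW σ, SW σ, SW_mul_SW hσ, SW_mul_SW hσ⟩, rfl⟩

lemma SW_mul_apply {σ : Equiv.Perm (Fin m)} (B : Matrix (Fin m) (Fin n) D) (i : Fin m) (j : Fin n) :
    ((SW σ : Matrix (Fin m) (Fin m) D) * B) i j = B (σ i) j := by
  simp only [Matrix.mul_apply, SW, Matrix.of_apply, ite_mul, one_mul, zero_mul]
  rw [Finset.sum_eq_single (σ i)]
  · simp
  · intro k _ hk; rw [if_neg (fun hh => hk hh)]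
  · intro hmem; exact absurd (Finset.mem_univ _) hmem

lemma mul_SW_apply {σ : Equiv.Perm (Fin n)} (hσ : ∀ x, σ (σ x) = x)
    (B : Matrix (Fin m) (Fin n) D) (i : Fin m) (j : Fin n) :
    (B * (SW σ : Matrix (Fin n) (Fin n) D)) i j = B i (σ j) := by
  simp only [Matrix.mul_apply, SW, Matrix.of_apply, mul_ite, mul_one, mul_zero]
  rw [Finset.sum_eq_single (σ j)]
  · rw [if_pos (hσ j).symm]
  · intro k _ hk
    rw [if_neg]
    intro hh
    apply hk
    rw [hh, hσ]
  · intro hmem; exact absurd (Finset.mem_univ _) hmem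

lemma exists_unit_col {c : Fin m → D} (z : Fin m) (hc : c ≠ 0) :
    ∃ P : Matrix (Fin m) (Fin m) D, IsUnit P ∧ ∀ i, P i z = c i := by
  obtain ⟨k, hk⟩ := Function.ne_iff.1 hc
  simp only [Pi.zero_apply] at hk
  set σ := Equiv.swap z k with hσdef
  have hσ : ∀ x, σ (σ x) = x := fun x => Equiv.swap_apply_self _ _ _
  set u : Fin m → D := fun i => c (σ i) - (Pi.single z 1 : Fin m → D) i with hu
  have h1 : (1 : D) + u z ≠ 0 := by
    simp only [hu, Pi.single_eq_same, hσdef, Equiv.swap_apply_left]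
    simpa using hk
  have hP0 := unit_one_add_col (D := D) h1
  refine ⟨SW σ * (1 + vecMulVec u (Pi.single z 1)), (SW_unit hσ).mul hP0, fun i => ?_⟩
  rw [SW_mul_apply]
  simp only [Matrix.add_apply, vmv_apply, Pi.single_eq_same, mul_one, hu, Matrix.one_apply]
  rw [hσ i]
  by_cases hiz : σ i = z
  · rw [if_pos hiz, hiz, Pi.single_eq_same]
    abel
  · rw [if_neg hiz, Pi.single_eq_of_ne hiz]
    abel

lemma exists_unit_row {r : Fin n → D} (z : Fin n) (hr : r ≠ 0) :
    ∃ Q : Matrix (Fin n) (Fin n) D, IsUnit Q ∧ ∀ j, Q z j = r j := by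
  obtain ⟨k, hk⟩ := Function.ne_iff.1 hr
  simp only [Pi.zero_apply] at hk
  set σ := Equiv.swap z k with hσdef
  have hσ : ∀ x, σ (σ x) = x := fun x => Equiv.swap_apply_self _ _ _
  set w : Fin n → D := fun j => r (σ j) - (Pi.single z 1 : Fin n → D) j with hw
  have h1 : (1 : D) + w z ≠ 0 := by
    simp only [hw, Pi.single_eq_same, hσdef, Equiv.swap_apply_left]
    simpa using hk
  have hQ0 := unit_one_add_row (D := D) h1
  refine ⟨(1 + vecMulVec (Pi.single z 1) w) * SW σ, hQ0.mul (SW_unit hσ), fun j => ?_⟩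
  rw [mul_SW_apply hσ]
  simp only [Matrix.add_apply, vmv_apply, Pi.single_eq_same, one_mul, hw, Matrix.one_apply]
  rw [hσ j]
  by_cases hjz : σ j = z
  · rw [if_pos hjz.symm, hjz, Pi.single_eq_same]
    abel
  · rw [if_neg (fun hh => hjz hh.symm), Pi.single_eq_of_ne hjz]
    abel

end Aux2
section Aux3
variable {D : Type} [DivisionRing D] {m n : ℕ}

lemma img_M1 (hm : 0 < m) (P : Matrix (Fin m) (Fin m) D) (A : Matrix (Fin m) (Fin n) D) :
    (fun X => P * X + A) '' M1set D m n = MS (fun i => P i ⟨0, hm⟩) A := by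
  ext X
  constructor
  · rintro ⟨Y, hY, rfl⟩
    refine ⟨Y ⟨0, hm⟩, ?_⟩
    ext i j
    simp only [Matrix.add_apply, Matrix.mul_apply, vmv_apply]
    congr 1
    rw [Finset.sum_eq_single (⟨0, hm⟩ : Fin m)]
    · intro k _ hk
      rw [hY k j (fun hv => hk (Fin.ext hv)), mul_zero]
    · intro hmem; exact absurd (Finset.mem_univ _) hmem
  · rintro ⟨r, rfl⟩
    refine ⟨Matrix.of fun k j => if k = ⟨0, hm⟩ then r j else 0, fun k j hk => if_neg (fun h => hk (by rw [h])), ?_⟩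
    ext i j
    simp only [Matrix.add_apply, Matrix.mul_apply, Matrix.of_apply, vmv_apply, mul_ite, mul_zero]
    congr 1
    rw [Finset.sum_ite_eq' Finset.univ (⟨0, hm⟩ : Fin m) (fun k => P i k * r j)]
    simp

lemma img_N1 (hn : 0 < n) (Q : Matrix (Fin n) (Fin n) D) (A : Matrix (Fin m) (Fin n) D) :
    (fun X => X * Q + A) '' N1set D m n = NS (fun j => Q ⟨0, hn⟩ j) A := by
  ext X
  constructor
  · rintro ⟨Y, hY, rfl⟩
    refine ⟨fun i => Y i ⟨0, hn⟩, ?_⟩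
    ext i j
    simp only [Matrix.add_apply, Matrix.mul_apply, vmv_apply]
    congr 1
    rw [Finset.sum_eq_single (⟨0, hn⟩ : Fin n)]
    · intro k _ hk
      rw [hY i k (fun hv => hk (Fin.ext hv)), zero_mul]
    · intro hmem; exact absurd (Finset.mem_univ _) hmem
  · rintro ⟨d, rfl⟩
    refine ⟨Matrix.of fun i k => if k = ⟨0, hn⟩ then d i else 0, fun i k hk => if_neg (fun h => hk (by rw [h])), ?_⟩
    ext i j
    simp only [Matrix.add_apply, Matrix.mul_apply, Matrix.of_apply, vmv_apply, ite_mul, zero_mul]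
    congr 1
    rw [Finset.sum_ite_eq' Finset.univ (⟨0, hn⟩ : Fin n) (fun k => d i * Q k j)]
    simp

lemma col_ne_zero {P : Matrix (Fin m) (Fin m) D} (hP : IsUnit P) (z : Fin m) :
    (fun i => P i z) ≠ 0 := by
  intro h
  obtain ⟨U, hU⟩ := hP
  have h1 : (U⁻¹ : (Matrix (Fin m) (Fin m) D)ˣ).val * P = 1 := by rw [← hU]; exact U.inv_mul
  have h2 := congrArg (fun M : Matrix (Fin m) (Fin m) D => M z z) h1
  simp only [Matrix.mul_apply, Matrix.one_apply_eq] at h2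
  have hz : ∀ k, (U⁻¹ : (Matrix (Fin m) (Fin m) D)ˣ).val z k * P k z = 0 := by
    intro k
    have hk := congrFun h k
    simp only [Pi.zero_apply] at hk
    rw [hk, mul_zero]
  rw [Finset.sum_congr rfl (fun k _ => hz k)] at h2
  simp at h2

lemma row_ne_zero {Q : Matrix (Fin n) (Fin n) D} (hQ : IsUnit Q) (z : Fin n) :
    (fun j => Q z j) ≠ 0 := by
  intro h
  obtain ⟨U, hU⟩ := hQ
  have h1 : Q * (U⁻¹ : (Matrix (Fin n) (Fin n) D)ˣ).val = 1 := by rw [← hU]; exact U.mul_inv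
  have h2 := congrArg (fun M : Matrix (Fin n) (Fin n) D => M z z) h1
  simp only [Matrix.mul_apply, Matrix.one_apply_eq] at h2
  have hz : ∀ k, Q z k * (U⁻¹ : (Matrix (Fin n) (Fin n) D)ˣ).val k z = 0 := by
    intro k
    have hk := congrFun h k
    simp only [Pi.zero_apply] at hk
    rw [hk, zero_mul]
  rw [Finset.sum_congr rfl (fun k _ => hz k)] at h2
  simp at h2

lemma typeone_iff (hm : 0 < m) {S : Set (Matrix (Fin m) (Fin n) D)} :
    IsTypeOne S ↔ ∃ (c : Fin m → D) (A : Matrix (Fin m) (Fin n) D), c ≠ 0 ∧ S = MS c A := by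
  constructor
  · rintro ⟨P, A, hP, rfl⟩
    exact ⟨fun i => P i ⟨0, hm⟩, A, col_ne_zero hP _, img_M1 hm P A⟩
  · rintro ⟨c, A, hc, rfl⟩
    obtain ⟨P, hP, hPc⟩ := exists_unit_col (⟨0, hm⟩ : Fin m) hc
    refine ⟨P, A, hP, ?_⟩
    rw [img_M1 hm P A]
    have hfe : (fun i => P i ⟨0, hm⟩) = c := funext hPc
    rw [hfe]

lemma typetwo_iff (hn : 0 < n) {S : Set (Matrix (Fin m) (Fin n) D)} :
    IsTypeTwo S ↔ ∃ (r : Fin n → D) (A : Matrix (Fin m) (Fin n) D), r ≠ 0 ∧ S = NS r A := by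
  constructor
  · rintro ⟨Q, A, hQ, rfl⟩
    exact ⟨fun j => Q ⟨0, hn⟩ j, A, row_ne_zero hQ _, img_N1 hn Q A⟩
  · rintro ⟨r, A, hr, rfl⟩
    obtain ⟨Q, hQ, hQr⟩ := exists_unit_row (⟨0, hn⟩ : Fin n) hr
    refine ⟨Q, A, hQ, ?_⟩
    rw [img_N1 hn Q A]
    have hfe : (fun j => Q ⟨0, hn⟩ j) = r := funext hQr
    rw [hfe]

lemma vmv_sub_left (u v : Fin m → D) (e : Fin n → D) :
    vecMulVec (u - v) e = vecMulVec u e - vecMulVec v e := by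
  ext i j; simp [vmv_apply, sub_mul]

lemma not_both (hm : 0 < m) (hn2 : 2 ≤ n) {S : Set (Matrix (Fin m) (Fin n) D)}
    (h1 : IsTypeOne S) (h2 : IsTypeTwo S) : False := by
  have hn : 0 < n := by omega
  obtain ⟨c, A1, hc, rfl⟩ := (typeone_iff hm).1 h1
  obtain ⟨r, A2, hr, hS⟩ := (typetwo_iff hn).1 h2
  have hA1 : A1 ∈ NS r A2 := by rw [← hS]; exact mem_MS_self c A1
  have key : ∀ s : Fin n → D, ∃ mu : D, s = mu • r := by
    intro s
    have hmem : vecMulVec c s + A1 ∈ NS r A2 := by rw [← hS]; exact ⟨s, rfl⟩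
    obtain ⟨d, hd⟩ := NS_diff hmem hA1
    have : vecMulVec c s = vecMulVec d r := by
      rw [← hd]; abel
    exact propR this hc
  obtain ⟨mu0, hmu0⟩ := key (Pi.single ⟨0, by omega⟩ 1)
  obtain ⟨mu1, hmu1⟩ := key (Pi.single ⟨1, by omega⟩ 1)
  have hmu0ne : mu0 ≠ 0 := by
    intro h; rw [h, zero_smul] at hmu0
    have := congrFun hmu0 ⟨0, by omega⟩
    simp at this
  have h01 : (⟨1, by omega⟩ : Fin n) ≠ ⟨0, by omega⟩ := by
    simp [Fin.ext_iff]
  have e0 := congrFun hmu0 ⟨1, by omega⟩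
  have e1 := congrFun hmu1 ⟨1, by omega⟩
  rw [Pi.single_eq_of_ne h01] at e0
  rw [Pi.single_eq_same] at e1
  simp only [Pi.smul_apply, smul_eq_mul] at e0 e1
  have hr1 : r ⟨1, by omega⟩ = 0 := by
    rcases mul_eq_zero.1 e0.symm with h | h
    · exact absurd h hmu0ne
    · exact h
  rw [hr1, mul_zero] at e1
  exact one_ne_zero e1

/-- clique predicate -/
def Cq (K : Set (Matrix (Fin m) (Fin n) D)) : Prop :=
  ∀ X ∈ K, ∀ Y ∈ K, X ≠ Y → mrank (X - Y) = 1

lemma ne_of_rank_one {X Y : Matrix (Fin m) (Fin n) D} (h : mrank (X - Y) = 1) : X ≠ Y := by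
  rintro rfl
  rw [sub_self, mrank_eq_zero_iff.2 rfl] at h
  exact absurd h.symm one_ne_zero

lemma vmv_zero_right (c : Fin m → D) : vecMulVec c (0 : Fin n → D) = 0 := by
  ext i j; simp [vmv_apply]

lemma vmv_zero_left (r : Fin n → D) : vecMulVec (0 : Fin m → D) r = 0 := by
  ext i j; simp [vmv_apply]

lemma MS_Cq {c : Fin m → D} (hc : c ≠ 0) (A : Matrix (Fin m) (Fin n) D) : Cq (MS c A) := by
  intro X hX Y hY hne
  obtain ⟨s, hs⟩ := MS_diff hX hY
  have hsne : s ≠ 0 := by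
    rintro rfl
    rw [vmv_zero_right] at hs
    exact hne (sub_eq_zero.1 hs)
  rw [hs]
  exact mrank_vecMulVec hc hsne

lemma NS_Cq {r : Fin n → D} (hr : r ≠ 0) (A : Matrix (Fin m) (Fin n) D) : Cq (NS r A) := by
  intro X hX Y hY hne
  obtain ⟨d, hd⟩ := NS_diff hX hY
  have hdne : d ≠ 0 := by
    rintro rfl
    rw [vmv_zero_left] at hd
    exact hne (sub_eq_zero.1 hd)
  rw [hd]
  exact mrank_vecMulVec hdne hr

lemma MS_eq_of_two {c c' : Fin m → D} (hc : c ≠ 0) (hc' : c' ≠ 0)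
    {A A' U V : Matrix (Fin m) (Fin n) D}
    (hU : U ∈ MS c A) (hU' : U ∈ MS c' A') (hV : V ∈ MS c A) (hV' : V ∈ MS c' A')
    (hUV : U ≠ V) : MS c A = MS c' A' := by
  obtain ⟨s, hs⟩ := MS_diff hU hV
  obtain ⟨s', hs'⟩ := MS_diff hU' hV'
  have hss : vecMulVec c' s' = vecMulVec c s := by rw [← hs, ← hs']
  have hs'ne : s' ≠ 0 := by
    rintro rfl
    rw [vmv_zero_right] at hs'
    exact hUV (sub_eq_zero.1 hs')
  obtain ⟨lam, hlam⟩ := propL hss hs'ne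
  have hlamne : lam ≠ 0 := by
    rintro rfl
    apply hc'
    rw [hlam]; funext i; simp
  have hMS : ∀ B : Matrix (Fin m) (Fin n) D, MS c' B = MS c B := by
    intro B; rw [hlam, MS_scale hlamne]
  rw [← MS_eq_of_mem hU, ← MS_eq_of_mem hU', hMS U]

lemma NS_eq_of_two {r r' : Fin n → D} (hr : r ≠ 0) (hr' : r' ≠ 0)
    {A A' U V : Matrix (Fin m) (Fin n) D}
    (hU : U ∈ NS r A) (hU' : U ∈ NS r' A') (hV : V ∈ NS r A) (hV' : V ∈ NS r' A')
    (hUV : U ≠ V) : NS r A = NS r' A' := by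
  obtain ⟨d, hd⟩ := NS_diff hU hV
  obtain ⟨d', hd'⟩ := NS_diff hU' hV'
  have hdd : vecMulVec d' r' = vecMulVec d r := by rw [← hd, ← hd']
  have hd'ne : d' ≠ 0 := by
    rintro rfl
    rw [vmv_zero_left] at hd'
    exact hUV (sub_eq_zero.1 hd')
  obtain ⟨mu, hmu⟩ := propR hdd hd'ne
  have hmune : mu ≠ 0 := by
    rintro rfl
    apply hr'
    rw [hmu, zero_smul]
  have hNS : ∀ B : Matrix (Fin m) (Fin n) D, NS r' B = NS r B := by
    intro B; rw [hmu, NS_scale hmune]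
  rw [← NS_eq_of_mem hU, ← NS_eq_of_mem hU', hNS U]

lemma typeone_eq_of_two (hm : 0 < m) {S S' : Set (Matrix (Fin m) (Fin n) D)}
    (h1 : IsTypeOne S) (h1' : IsTypeOne S') {U V : Matrix (Fin m) (Fin n) D}
    (hU : U ∈ S) (hU' : U ∈ S') (hV : V ∈ S) (hV' : V ∈ S') (hUV : U ≠ V) : S = S' := by
  obtain ⟨c, A, hc, rfl⟩ := (typeone_iff hm).1 h1
  obtain ⟨c', A', hc', rfl⟩ := (typeone_iff hm).1 h1'
  exact MS_eq_of_two hc hc' hU hU' hV hV' hUV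

lemma typetwo_eq_of_two (hn : 0 < n) {S S' : Set (Matrix (Fin m) (Fin n) D)}
    (h2 : IsTypeTwo S) (h2' : IsTypeTwo S') {U V : Matrix (Fin m) (Fin n) D}
    (hU : U ∈ S) (hU' : U ∈ S') (hV : V ∈ S) (hV' : V ∈ S') (hUV : U ≠ V) : S = S' := by
  obtain ⟨r, A, hr, rfl⟩ := (typetwo_iff hn).1 h2
  obtain ⟨r', A', hr', rfl⟩ := (typetwo_iff hn).1 h2'
  exact NS_eq_of_two hr hr' hU hU' hV hV' hUV

lemma single_ne_zero' (z : Fin m) : (Pi.single z 1 : Fin m → D) ≠ 0 := by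
  intro h
  have := congrFun h z
  simp at this

lemma exists_typeone_mem (hm : 0 < m) (B : Matrix (Fin m) (Fin n) D) :
    ∃ S, IsTypeOne S ∧ B ∈ S :=
  ⟨MS (Pi.single ⟨0, hm⟩ 1) B, (typeone_iff hm).2 ⟨_, B, single_ne_zero' _, rfl⟩,
    mem_MS_self _ _⟩

lemma exists_typetwo_mem (hn : 0 < n) (B : Matrix (Fin m) (Fin n) D) :
    ∃ S, IsTypeTwo S ∧ B ∈ S :=
  ⟨NS (Pi.single ⟨0, hn⟩ 1) B, (typetwo_iff hn).2 ⟨_, B, single_ne_zero' _, rfl⟩,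
    mem_NS_self _ _⟩

end Aux3
section Aux4
variable {D : Type} [DivisionRing D] {m n : ℕ}

lemma rank_pair {x y : Fin m → D} {a b : Fin n → D}
    (hx : x ≠ 0) (ha : a ≠ 0) (hy : y ≠ 0) (hb : b ≠ 0)
    (h : mrank (vecMulVec x a - vecMulVec y b) ≤ 1) :
    (∃ lam : D, lam ≠ 0 ∧ y = fun i => x i * lam) ∨ (∃ mu : D, mu ≠ 0 ∧ b = mu • a) := by
  by_cases hab : ∃ mu : D, b = mu • a
  · obtain ⟨mu, hmu⟩ := hab
    refine Or.inr ⟨mu, ?_, hmu⟩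
    rintro rfl
    rw [zero_smul] at hmu
    exact hb hmu
  · left
    obtain ⟨cc, rr, hd⟩ := mrank_le_one_iff.1 h
    have hpw : ∀ i j, x i * a j - y i * b j = cc i * rr j := by
      intro i j
      have := congrFun (congrFun hd i) j
      simpa [Matrix.sub_apply, vmv_apply] using this
    have ind : ∀ p q : D, (∀ j, p * a j + q * b j = 0) → p = 0 ∧ q = 0 := by
      intro p q hpq
      by_cases hq : q = 0
      · subst hq
        obtain ⟨j, hj⟩ := Function.ne_iff.1 ha
        have := hpq j
        simp only [zero_mul, add_zero] at this
        rcases mul_eq_zero.1 this with h' | h'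
        · exact ⟨h', rfl⟩
        · exact absurd h' (by simpa using hj)
      · exfalso
        apply hab
        refine ⟨-(q⁻¹ * p), funext fun j => ?_⟩
        have h1 := hpq j
        have h2 : q * b j = -(p * a j) := by
          have : p * a j + q * b j - p * a j = 0 - p * a j := by rw [h1]
          simpa using this
        have h3 : b j = q⁻¹ * -(p * a j) := by
          rw [← h2, inv_mul_cancel_left₀ hq]
        rw [h3]
        simp only [Pi.smul_apply, smul_eq_mul]
        rw [mul_neg, neg_mul, ← mul_assoc]
    by_cases hz : ∀ i j, cc i * rr j = 0
    · exfalso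
      apply hx
      funext i
      have := ind (x i) (-(y i)) (fun j => by
        have h1 := hpw i j
        rw [hz i j] at h1
        rw [neg_mul]
        have : x i * a j - y i * b j + y i * b j = 0 + y i * b j := by rw [h1]
        simp only [sub_add_cancel, zero_add] at this
        rw [this]
        simp)
      exact this.1
    · push_neg at hz
      obtain ⟨i₀, j₀, hcc0⟩ := hz
      have hcci : cc i₀ ≠ 0 := left_ne_zero_of_mul hcc0
      set t : Fin m → D := fun i => cc i * (cc i₀)⁻¹ with htdef
      have hrel : ∀ i j, x i * a j - y i * b j = t i * (x i₀ * a j - y i₀ * b j) := by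
        intro i j
        rw [hpw i j, hpw i₀ j, htdef]
        rw [mul_assoc, inv_mul_cancel_left₀ hcci]
      have hxy : ∀ i, x i = t i * x i₀ ∧ y i = t i * y i₀ := by
        intro i
        have h2 : ∀ j, (x i - t i * x i₀) * a j + (t i * y i₀ - y i) * b j = 0 := by
          intro j
          have e1 := hrel i j
          rw [mul_sub] at e1
          have goal_eq : (x i - t i * x i₀) * a j + (t i * y i₀ - y i) * b j =
              (x i * a j - y i * b j) - (t i * (x i₀ * a j) - t i * (y i₀ * b j)) := by
            simp only [sub_mul, mul_assoc]
            abel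
          rw [goal_eq, e1, sub_self]
        have := ind _ _ h2
        constructor
        · have := this.1; rwa [sub_eq_zero] at this
        · have := this.2; rw [sub_eq_zero] at this; exact this.symm
      by_cases hx0 : x i₀ = 0
      · exfalso
        apply hx
        funext i
        rw [(hxy i).1, hx0, mul_zero]
        rfl
      · refine ⟨(x i₀)⁻¹ * y i₀, ?_, funext fun i => ?_⟩
        · intro hlam
          have hy0 : y i₀ = 0 := by
            have : x i₀ * ((x i₀)⁻¹ * y i₀) = x i₀ * 0 := by rw [hlam]
            rwa [mul_inv_cancel_left₀ hx0, mul_zero] at this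
          apply hy
          funext i
          rw [(hxy i).2, hy0, mul_zero]
          rfl
        · rw [(hxy i).2]
          have ht : t i = x i * (x i₀)⁻¹ := by
            rw [(hxy i).1, mul_assoc, mul_inv_cancel₀ hx0, mul_one]
          rw [ht, mul_assoc]

end Aux4
section Aux5
variable {D : Type} [DivisionRing D] {m n : ℕ}

lemma vmv_smul_shift (c : Fin m → D) (mu : D) (r : Fin n → D) :
    vecMulVec c (mu • r) = vecMulVec (fun i => c i * mu) r := by
  ext i j; simp [vmv_apply, Pi.smul_apply, smul_eq_mul, mul_assoc]

lemma Cq_diff_le {K : Set (Matrix (Fin m) (Fin n) D)} (hK : Cq K)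
    {X Y : Matrix (Fin m) (Fin n) D} (hX : X ∈ K) (hY : Y ∈ K) : mrank (X - Y) ≤ 1 := by
  by_cases h : X = Y
  · rw [h, sub_self, mrank_eq_zero_iff.2 rfl]; omega
  · exact (hK X hX Y hY h).le

lemma clique_subset_maximal (hm : 0 < m) (hn : 0 < n)
    {K : Set (Matrix (Fin m) (Fin n) D)} (hK : Cq K)
    {B : Matrix (Fin m) (Fin n) D} (hB : B ∈ K) :
    ∃ W, IsMaximalSet W ∧ K ⊆ W := by
  by_cases htriv : ∀ X ∈ K, X = B
  · refine ⟨MS (Pi.single ⟨0, hm⟩ 1) B, Or.inl ((typeone_iff hm).2 ⟨_, B, single_ne_zero' _, rfl⟩),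
      fun X hX => ?_⟩
    rw [htriv X hX]; exact mem_MS_self _ _
  · push_neg at htriv
    obtain ⟨X₀, hX₀K, hX₀B⟩ := htriv
    obtain ⟨x₀, a₀, hx₀, ha₀, hXd⟩ := mrank_eq_one_iff.1 (hK X₀ hX₀K B hB hX₀B)
    have hX₀MS : X₀ ∈ MS x₀ B := MS_mem_iff_diff.2 ⟨a₀, hXd⟩
    by_cases hMS : ∀ X ∈ K, X ∈ MS x₀ B
    · exact ⟨MS x₀ B, Or.inl ((typeone_iff hm).2 ⟨x₀, B, hx₀, rfl⟩), hMS⟩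
    · push_neg at hMS
      obtain ⟨Y₀, hY₀K, hY₀MS⟩ := hMS
      have hY₀B : Y₀ ≠ B := fun h => hY₀MS (h ▸ mem_MS_self x₀ B)
      obtain ⟨y₀, b₀, hy₀, hb₀, hYd⟩ := mrank_eq_one_iff.1 (hK Y₀ hY₀K B hB hY₀B)
      have hnp : ∀ lam : D, y₀ ≠ fun i => x₀ i * lam := by
        intro lam hl
        apply hY₀MS
        refine MS_mem_iff_diff.2 ⟨lam • b₀, ?_⟩
        rw [hYd, hl, ← vmv_smul_shift]
      have hY₀X₀ : Y₀ ≠ X₀ := fun h => hY₀MS (h ▸ hX₀MS)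
      have hYX : mrank (vecMulVec y₀ b₀ - vecMulVec x₀ a₀) ≤ 1 := by
        rw [← hYd, ← hXd, sub_sub_sub_cancel_right]
        exact Cq_diff_le hK hY₀K hX₀K
      have hba : ∃ mu : D, mu ≠ 0 ∧ b₀ = mu • a₀ := by
        rcases rank_pair hy₀ hb₀ hx₀ ha₀ hYX with ⟨lam, hlam, hl⟩ | ⟨mu, hmu, hm'⟩
        · exfalso
          apply hnp lam⁻¹
          funext i
          rw [congrFun hl i, mul_assoc, mul_inv_cancel₀ hlam, mul_one]
        · exact ⟨mu⁻¹, inv_ne_zero hmu, by rw [hm', smul_smul, inv_mul_cancel₀ hmu, one_smul]⟩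
      obtain ⟨mu₀, hmu₀, hb₀a₀⟩ := hba
      refine ⟨NS a₀ B, Or.inr ((typetwo_iff hn).2 ⟨a₀, B, ha₀, rfl⟩), fun Z hZ => ?_⟩
      by_cases hZB : Z = B
      · rw [hZB]; exact mem_NS_self _ _
      by_cases hZX₀ : Z = X₀
      · rw [hZX₀]; exact NS_mem_iff_diff.2 ⟨x₀, hXd⟩
      by_cases hZY₀ : Z = Y₀
      · rw [hZY₀]
        refine NS_mem_iff_diff.2 ⟨fun i => y₀ i * mu₀, ?_⟩
        rw [hYd, hb₀a₀, vmv_smul_shift]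
      obtain ⟨z, cz, hz, hcz, hZd⟩ := mrank_eq_one_iff.1 (hK Z hZ B hB hZB)
      have hZX : mrank (vecMulVec z cz - vecMulVec x₀ a₀) ≤ 1 := by
        rw [← hZd, ← hXd, sub_sub_sub_cancel_right]
        exact Cq_diff_le hK hZ hX₀K
      have hZY : mrank (vecMulVec z cz - vecMulVec y₀ b₀) ≤ 1 := by
        rw [← hZd, ← hYd, sub_sub_sub_cancel_right]
        exact Cq_diff_le hK hZ hY₀K
      rcases rank_pair hz hcz hx₀ ha₀ hZX with ⟨lam1, hlam1, hl1⟩ | ⟨mu, hmu, hmeq⟩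
      · rcases rank_pair hz hcz hy₀ hb₀ hZY with ⟨lam2, hlam2, hl2⟩ | ⟨mu, hmu, hmeq⟩
        · exfalso
          apply hnp (lam1⁻¹ * lam2)
          funext i
          rw [congrFun hl2 i]
          have hzi : z i = x₀ i * lam1⁻¹ := by
            rw [congrFun hl1 i, mul_assoc, mul_inv_cancel₀ hlam1, mul_one]
          rw [hzi, mul_assoc]
        · -- b₀ = mu • cz  ⇒  cz = mu⁻¹ • b₀ = (mu⁻¹ * mu₀) • a₀
          refine NS_mem_iff_diff.2 ⟨fun i => z i * (mu⁻¹ * mu₀), ?_⟩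
          have hcz' : cz = (mu⁻¹ * mu₀) • a₀ := by
            rw [← smul_smul, ← hb₀a₀, hmeq, smul_smul, inv_mul_cancel₀ hmu, one_smul]
          rw [hZd, hcz', vmv_smul_shift]
      · -- a₀ = mu • cz ⇒ cz = mu⁻¹ • a₀
        refine NS_mem_iff_diff.2 ⟨fun i => z i * mu⁻¹, ?_⟩
        have hcz' : cz = mu⁻¹ • a₀ := by
          rw [hmeq, smul_smul, inv_mul_cancel₀ hmu, one_smul]
        rw [hZd, hcz', vmv_smul_shift]

end Aux5
section ATL
variable {D D' : Type} [DivisionRing D] [DivisionRing D'] {m n m' n' : ℕ}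

lemma Cq_image {φ : Matrix (Fin m) (Fin n) D → Matrix (Fin m') (Fin n') D'}
    (hhom : ∀ X Y, mrank (X - Y) = 1 → mrank (φ X - φ Y) = 1)
    {K : Set (Matrix (Fin m) (Fin n) D)} (hK : Cq K) : Cq (φ '' K) := by
  rintro _ ⟨X, hX, rfl⟩ _ ⟨Y, hY, rfl⟩ hne
  exact hhom X Y (hK X hX Y hY (fun h => hne (congrArg φ h)))

lemma ATL (hm' : 0 < m') (hn' : 0 < n')
    {φ : Matrix (Fin m) (Fin n) D → Matrix (Fin m') (Fin n') D'}
    (hhom : ∀ X Y, mrank (X - Y) = 1 → mrank (φ X - φ Y) = 1)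
    (hnd : ¬ Degenerate φ)
    {A : Matrix (Fin m) (Fin n) D} (hA : mrank A ≤ 1)
    {ι κ : Type}
    (R : ι → Set (Matrix (Fin m) (Fin n) D)) (S : κ → Set (Matrix (Fin m) (Fin n) D))
    (Msrc : Set (Matrix (Fin m) (Fin n) D)) (M' : Set (Matrix (Fin m') (Fin n') D'))
    (hM'max : IsMaximalSet M')
    (hφM : ∀ X ∈ Msrc, φ X ∈ M')
    (hMc : Cq Msrc) (hAM : A ∈ Msrc)
    (hRc : ∀ i, Cq (R i)) (hAR : ∀ i, A ∈ R i)
    (hSc : ∀ k, Cq (S k)) (hAS : ∀ k, A ∈ S k)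
    (hcover : ∀ X, mrank (X - A) ≤ 1 → X ∈ Msrc ∨ ∃ i, X ∈ R i)
    (hcross : ∀ (i₁ i₂ : ι), ∀ X₁ ∈ R i₁, X₁ ≠ A → ∃ k, X₁ ∈ S k ∧
        (∃ X₂ ∈ R i₂, X₂ ∈ S k ∧ X₂ ≠ A) ∧ (∃ Xc ∈ Msrc, Xc ∈ S k ∧ Xc ≠ A))
    (hneg : ∀ i W, IsMaximalSet W → φ '' R i ⊆ W →
        ((IsTypeOne W ∧ IsTypeOne M') ∨ (IsTypeTwo W ∧ IsTypeTwo M')) → W = M') :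
    False := by
  have hφA : φ A ∈ M' := hφM A hAM
  have hadj : ∀ (K : Set (Matrix (Fin m) (Fin n) D)), Cq K → ∀ X ∈ K, X ≠ A → A ∈ K →
      φ X ≠ φ A := by
    intro K hKc X hX hXA hAK
    exact ne_of_rank_one (hhom X A (hKc X hX A hAK hXA))
  rcases hM'max with hM'1 | hM'2
  · -- M' is of type one
    by_cases hall : ∀ i, φ '' R i ⊆ M'
    · obtain ⟨Ns, hNs2, hφANs⟩ := exists_typetwo_mem hn' (φ A)
      refine hnd ⟨A, hA, M', Ns, hM'1, hNs2, ⟨hφA, hφANs⟩, ?_⟩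
      rintro _ ⟨X, hX, rfl⟩
      rcases hcover X hX with h | ⟨i, h⟩
      · exact Or.inl (hφM X h)
      · exact Or.inl (hall i ⟨X, h, rfl⟩)
    · push_neg at hall
      obtain ⟨i₁, hni₁⟩ := hall
      obtain ⟨W₁, hW₁max, hW₁⟩ := clique_subset_maximal hm' hn' (Cq_image hhom (hRc i₁))
        (⟨A, hAR i₁, rfl⟩ : φ A ∈ φ '' R i₁)
      have hW₁ne : W₁ ≠ M' := fun h => hni₁ (h ▸ hW₁)
      have hW₁2 : IsTypeTwo W₁ := by
        rcases hW₁max with h1 | h2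
        · exact absurd (hneg i₁ W₁ (Or.inl h1) hW₁ (Or.inl ⟨h1, hM'1⟩)) hW₁ne
        · exact h2
      have hφAW₁ : φ A ∈ W₁ := hW₁ ⟨A, hAR i₁, rfl⟩
      have key : ∀ i₂ W₂, IsMaximalSet W₂ → φ '' R i₂ ⊆ W₂ → IsTypeTwo W₂ → W₂ = W₁ := by
        intro i₂ W₂ hW₂max hW₂sub hW₂2
        by_contra hne
        apply hni₁
        rintro _ ⟨X₁, hX₁, rfl⟩
        by_cases hXA : X₁ = A
        · rw [hXA]; exact hφA
        obtain ⟨k, hX₁S, ⟨X₂, hX₂R, hX₂S, hX₂A⟩, ⟨Xc, hXcM, hXcS, hXcA⟩⟩ :=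
          hcross i₁ i₂ X₁ hX₁ hXA
        obtain ⟨V, hVmax, hVsub⟩ := clique_subset_maximal hm' hn' (Cq_image hhom (hSc k))
          (⟨A, hAS k, rfl⟩ : φ A ∈ φ '' S k)
        have hφAV : φ A ∈ V := hVsub ⟨A, hAS k, rfl⟩
        have hφX₁V : φ X₁ ∈ V := hVsub ⟨X₁, hX₁S, rfl⟩
        have hφX₂V : φ X₂ ∈ V := hVsub ⟨X₂, hX₂S, rfl⟩
        have hφXcV : φ Xc ∈ V := hVsub ⟨Xc, hXcS, rfl⟩
        have hφX₁A : φ X₁ ≠ φ A := hadj _ (hRc i₁) X₁ hX₁ hXA (hAR i₁)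
        have hφX₂A : φ X₂ ≠ φ A := hadj _ (hRc i₂) X₂ hX₂R hX₂A (hAR i₂)
        have hφXcA : φ Xc ≠ φ A := hadj _ hMc Xc hXcM hXcA hAM
        rcases hVmax with hV1 | hV2
        · have hVM : V = M' :=
            typeone_eq_of_two hm' hV1 hM'1 hφXcV (hφM Xc hXcM) hφAV hφA hφXcA
          exact hVM ▸ hφX₁V
        · have hφX₁W₁ : φ X₁ ∈ W₁ := hW₁ ⟨X₁, hX₁, rfl⟩
          have hVW : V = W₁ :=
            typetwo_eq_of_two hn' hV2 hW₁2 hφX₁V hφX₁W₁ hφAV hφAW₁ hφX₁A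
          have hφX₂W₁ : φ X₂ ∈ W₁ := hVW ▸ hφX₂V
          have hφX₂W₂ : φ X₂ ∈ W₂ := hW₂sub ⟨X₂, hX₂R, rfl⟩
          exact absurd (typetwo_eq_of_two hn' hW₂2 hW₁2 hφX₂W₂ hφX₂W₁
            (hW₂sub ⟨A, hAR i₂, rfl⟩) hφAW₁ hφX₂A) hne
      refine hnd ⟨A, hA, M', W₁, hM'1, hW₁2, ⟨hφA, hφAW₁⟩, ?_⟩
      rintro _ ⟨X, hX, rfl⟩
      rcases hcover X hX with h | ⟨i, h⟩
      · exact Or.inl (hφM X h)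
      · obtain ⟨W₂, hW₂max, hW₂sub⟩ := clique_subset_maximal hm' hn' (Cq_image hhom (hRc i))
          (⟨A, hAR i, rfl⟩ : φ A ∈ φ '' R i)
        rcases hW₂max with h1 | h2
        · have := hneg i W₂ (Or.inl h1) hW₂sub (Or.inl ⟨h1, hM'1⟩)
          exact Or.inl (this ▸ hW₂sub ⟨X, h, rfl⟩)
        · have := key i W₂ (Or.inr h2) hW₂sub h2
          exact Or.inr (this ▸ hW₂sub ⟨X, h, rfl⟩)
  · -- M' is of type two
    by_cases hall : ∀ i, φ '' R i ⊆ M'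
    · obtain ⟨Ms, hMs1, hφAMs⟩ := exists_typeone_mem hm' (φ A)
      refine hnd ⟨A, hA, Ms, M', hMs1, hM'2, ⟨hφAMs, hφA⟩, ?_⟩
      rintro _ ⟨X, hX, rfl⟩
      rcases hcover X hX with h | ⟨i, h⟩
      · exact Or.inr (hφM X h)
      · exact Or.inr (hall i ⟨X, h, rfl⟩)
    · push_neg at hall
      obtain ⟨i₁, hni₁⟩ := hall
      obtain ⟨W₁, hW₁max, hW₁⟩ := clique_subset_maximal hm' hn' (Cq_image hhom (hRc i₁))
        (⟨A, hAR i₁, rfl⟩ : φ A ∈ φ '' R i₁)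
      have hW₁ne : W₁ ≠ M' := fun h => hni₁ (h ▸ hW₁)
      have hW₁1 : IsTypeOne W₁ := by
        rcases hW₁max with h1 | h2
        · exact h1
        · exact absurd (hneg i₁ W₁ (Or.inr h2) hW₁ (Or.inr ⟨h2, hM'2⟩)) hW₁ne
      have hφAW₁ : φ A ∈ W₁ := hW₁ ⟨A, hAR i₁, rfl⟩
      have key : ∀ i₂ W₂, IsMaximalSet W₂ → φ '' R i₂ ⊆ W₂ → IsTypeOne W₂ → W₂ = W₁ := by
        intro i₂ W₂ hW₂max hW₂sub hW₂1
        by_contra hne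
        apply hni₁
        rintro _ ⟨X₁, hX₁, rfl⟩
        by_cases hXA : X₁ = A
        · rw [hXA]; exact hφA
        obtain ⟨k, hX₁S, ⟨X₂, hX₂R, hX₂S, hX₂A⟩, ⟨Xc, hXcM, hXcS, hXcA⟩⟩ :=
          hcross i₁ i₂ X₁ hX₁ hXA
        obtain ⟨V, hVmax, hVsub⟩ := clique_subset_maximal hm' hn' (Cq_image hhom (hSc k))
          (⟨A, hAS k, rfl⟩ : φ A ∈ φ '' S k)
        have hφAV : φ A ∈ V := hVsub ⟨A, hAS k, rfl⟩
        have hφX₁V : φ X₁ ∈ V := hVsub ⟨X₁, hX₁S, rfl⟩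
        have hφX₂V : φ X₂ ∈ V := hVsub ⟨X₂, hX₂S, rfl⟩
        have hφXcV : φ Xc ∈ V := hVsub ⟨Xc, hXcS, rfl⟩
        have hφX₁A : φ X₁ ≠ φ A := hadj _ (hRc i₁) X₁ hX₁ hXA (hAR i₁)
        have hφX₂A : φ X₂ ≠ φ A := hadj _ (hRc i₂) X₂ hX₂R hX₂A (hAR i₂)
        have hφXcA : φ Xc ≠ φ A := hadj _ hMc Xc hXcM hXcA hAM
        rcases hVmax with hV1 | hV2
        · have hφX₁W₁ : φ X₁ ∈ W₁ := hW₁ ⟨X₁, hX₁, rfl⟩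
          have hVW : V = W₁ :=
            typeone_eq_of_two hm' hV1 hW₁1 hφX₁V hφX₁W₁ hφAV hφAW₁ hφX₁A
          have hφX₂W₁ : φ X₂ ∈ W₁ := hVW ▸ hφX₂V
          have hφX₂W₂ : φ X₂ ∈ W₂ := hW₂sub ⟨X₂, hX₂R, rfl⟩
          exact absurd (typeone_eq_of_two hm' hW₂1 hW₁1 hφX₂W₂ hφX₂W₁
            (hW₂sub ⟨A, hAR i₂, rfl⟩) hφAW₁ hφX₂A) hne
        · have hVM : V = M' :=
            typetwo_eq_of_two hn' hV2 hM'2 hφXcV (hφM Xc hXcM) hφAV hφA hφXcA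
          exact hVM ▸ hφX₁V
      refine hnd ⟨A, hA, W₁, M', hW₁1, hM'2, ⟨hφAW₁, hφA⟩, ?_⟩
      rintro _ ⟨X, hX, rfl⟩
      rcases hcover X hX with h | ⟨i, h⟩
      · exact Or.inr (hφM X h)
      · obtain ⟨W₂, hW₂max, hW₂sub⟩ := clique_subset_maximal hm' hn' (Cq_image hhom (hRc i))
          (⟨A, hAR i, rfl⟩ : φ A ∈ φ '' R i)
        rcases hW₂max with h1 | h2
        · have := key i W₂ (Or.inl h1) hW₂sub h1
          exact Or.inl (this ▸ hW₂sub ⟨X, h, rfl⟩)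
        · have := hneg i W₂ (Or.inr h2) hW₂sub (Or.inr ⟨h2, hM'2⟩)
          exact Or.inr (this ▸ hW₂sub ⟨X, h, rfl⟩)
end ATL

/-- Lemma 3.7(a). -/
theorem nondegenerate_extension_same_type
    {D D' : Type} [DivisionRing D] [DivisionRing D'] {m n m' n' : ℕ}
    (hm : 2 ≤ m) (hn : 2 ≤ n) (hm' : 2 ≤ m') (hn' : 2 ≤ n')
    (φ : Matrix (Fin m) (Fin n) D → Matrix (Fin m') (Fin n') D')
    (hhom : ∀ X Y, mrank (X - Y) = 1 → mrank (φ X - φ Y) = 1)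
    (hnd : ¬ Degenerate φ) (h0 : φ 0 = 0)
    (M : Set (Matrix (Fin m) (Fin n) D)) (hMmax : IsMaximalSet M) (h0M : (0 : Matrix (Fin m) (Fin n) D) ∈ M)
    (M' : Set (Matrix (Fin m') (Fin n') D')) (hM'max : IsMaximalSet M')
    (hφM : φ '' M ⊆ M') :
    ∀ A ∈ M, ∃ R : Set (Matrix (Fin m) (Fin n) D), ∃ R' : Set (Matrix (Fin m') (Fin n') D'),
      (IsTypeOne M → IsTypeOne R) ∧ (IsTypeTwo M → IsTypeTwo R) ∧
      R ∩ M = {A} ∧ IsMaximalSet R' ∧ φ '' R ⊆ R' ∧ R' ≠ M' ∧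
      ((IsTypeOne R' ∧ IsTypeOne M') ∨ (IsTypeTwo R' ∧ IsTypeTwo M')) := by
  have hm0 : 0 < m := by omega
  have hn0 : 0 < n := by omega
  have hm'0 : 0 < m' := by omega
  have hn'0 : 0 < n' := by omega
  intro A hA
  by_contra hcon
  have hφM' : ∀ X ∈ M, φ X ∈ M' := fun X hX => hφM ⟨X, hX, rfl⟩
  rcases hMmax with hM1 | hM2
  · -- M is of type one
    obtain ⟨c, A₀, hc, hMeq⟩ := (typeone_iff hm0).1 hM1
    subst hMeq
    have hArank : mrank A ≤ 1 := by
      obtain ⟨s, hs⟩ := MS_diff hA h0M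
      rw [sub_zero] at hs
      exact mrank_le_one_iff.2 ⟨c, s, hs⟩
    have hMA : MS c A = MS c A₀ := MS_eq_of_mem hA
    -- admissible directions
    set ι := {c₂ : Fin m → D // c₂ ≠ 0 ∧ ∀ lam : D, c₂ ≠ fun i => c i * lam} with hι
    set κ := {s : Fin n → D // s ≠ 0} with hκ
    have hRM : ∀ i : ι, MS i.1 A ∩ MS c A₀ = {A} := by
      intro i
      ext X
      simp only [Set.mem_inter_iff, Set.mem_singleton_iff]
      constructor
      · rintro ⟨hXR, hXM⟩
        obtain ⟨s, hs⟩ := MS_diff hXR (mem_MS_self i.1 A)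
        obtain ⟨u, hu⟩ := MS_diff hXM hA
        by_cases hsz : s = 0
        · rw [hsz, vmv_zero_right] at hs
          exact sub_eq_zero.1 hs
        · exfalso
          have hvv : vecMulVec i.1 s = vecMulVec c u := by rw [← hs, ← hu]
          obtain ⟨lam, hlam⟩ := propL hvv hsz
          exact i.2.2 lam hlam
      · rintro rfl
        exact ⟨mem_MS_self _ _, hA⟩
    refine ATL hm'0 hn'0 hhom hnd hArank
      (fun i : ι => MS i.1 A) (fun k : κ => NS k.1 A) (MS c A₀) M' hM'max hφM'
      (MS_Cq hc A₀) hA (fun i => MS_Cq i.2.1 A) (fun i => mem_MS_self i.1 A)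
      (fun k => NS_Cq k.2 A) (fun k => mem_NS_self k.1 A) ?_ ?_ ?_
    · -- cover
      intro X hX
      obtain ⟨c₂, s, hd⟩ := mrank_le_one_iff.1 hX
      by_cases hex : ∃ lam : D, c₂ = fun i => c i * lam
      · left
        obtain ⟨lam, rfl⟩ := hex
        rw [← hMA]
        exact MS_mem_iff_diff.2 ⟨lam • s, by rw [hd, vmv_smul_shift]⟩
      · right
        push_neg at hex
        have hc₂ : c₂ ≠ 0 := by
          intro hz
          exact hex 0 (by rw [hz]; funext i; simp)
        exact ⟨⟨c₂, hc₂, hex⟩, MS_mem_iff_diff.2 ⟨s, hd⟩⟩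
    · -- cross
      intro i₁ i₂ X₁ hX₁ hX₁A
      obtain ⟨s, hs⟩ := MS_diff hX₁ (mem_MS_self i₁.1 A)
      have hsne : s ≠ 0 := by
        rintro rfl
        rw [vmv_zero_right] at hs
        exact hX₁A (sub_eq_zero.1 hs)
      refine ⟨⟨s, hsne⟩, NS_mem_iff_diff.2 ⟨i₁.1, hs⟩,
        ⟨vecMulVec i₂.1 s + A, ⟨s, rfl⟩, ⟨i₂.1, rfl⟩, vmv_add_ne i₂.2.1 hsne⟩,
        ⟨vecMulVec c s + A, ?_, ⟨c, rfl⟩, vmv_add_ne hc hsne⟩⟩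
      rw [← hMA]
      exact ⟨s, rfl⟩
    · -- hneg from hcon
      intro i W hWmax hWsub hsame
      by_contra hne
      exact hcon ⟨MS i.1 A, W,
        fun _ => (typeone_iff hm0).2 ⟨i.1, A, i.2.1, rfl⟩,
        fun h2 => absurd h2 (fun h2' => not_both hm0 hn ((typeone_iff hm0).2 ⟨c, A₀, hc, rfl⟩) h2'),
        hRM i, hWmax, hWsub, hne, hsame⟩
  · -- M is of type two
    obtain ⟨r, A₀, hr, hMeq⟩ := (typetwo_iff hn0).1 hM2
    subst hMeq
    have hArank : mrank A ≤ 1 := by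
      obtain ⟨d, hd⟩ := NS_diff hA h0M
      rw [sub_zero] at hd
      exact mrank_le_one_iff.2 ⟨d, r, hd⟩
    have hMA : NS r A = NS r A₀ := NS_eq_of_mem hA
    set ι := {s₂ : Fin n → D // s₂ ≠ 0 ∧ ∀ mu : D, s₂ ≠ mu • r} with hι
    set κ := {d : Fin m → D // d ≠ 0} with hκ
    have hRM : ∀ i : ι, NS i.1 A ∩ NS r A₀ = {A} := by
      intro i
      ext X
      simp only [Set.mem_inter_iff, Set.mem_singleton_iff]
      constructor
      · rintro ⟨hXR, hXM⟩
        obtain ⟨d, hd⟩ := NS_diff hXR (mem_NS_self i.1 A)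
        obtain ⟨d', hd'⟩ := NS_diff hXM hA
        by_cases hdz : d = 0
        · rw [hdz, vmv_zero_left] at hd
          exact sub_eq_zero.1 hd
        · exfalso
          have hvv : vecMulVec d i.1 = vecMulVec d' r := by rw [← hd, ← hd']
          obtain ⟨mu, hmu⟩ := propR hvv hdz
          exact i.2.2 mu hmu
      · rintro rfl
        exact ⟨mem_NS_self _ _, hA⟩
    refine ATL hm'0 hn'0 hhom hnd hArank
      (fun i : ι => NS i.1 A) (fun k : κ => MS k.1 A) (NS r A₀) M' hM'max hφM'
      (NS_Cq hr A₀) hA (fun i => NS_Cq i.2.1 A) (fun i => mem_NS_self i.1 A)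
      (fun k => MS_Cq k.2 A) (fun k => mem_MS_self k.1 A) ?_ ?_ ?_
    · -- cover
      intro X hX
      obtain ⟨d, s, hd⟩ := mrank_le_one_iff.1 hX
      by_cases hex : ∃ mu : D, s = mu • r
      · left
        obtain ⟨mu, rfl⟩ := hex
        rw [← hMA]
        exact NS_mem_iff_diff.2 ⟨fun i => d i * mu, by rw [hd, vmv_smul_shift]⟩
      · right
        push_neg at hex
        have hs : s ≠ 0 := by
          intro hz
          exact hex 0 (by rw [hz, zero_smul])
        exact ⟨⟨s, hs, hex⟩, NS_mem_iff_diff.2 ⟨d, hd⟩⟩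
    · -- cross
      intro i₁ i₂ X₁ hX₁ hX₁A
      obtain ⟨d, hd⟩ := NS_diff hX₁ (mem_NS_self i₁.1 A)
      have hdne : d ≠ 0 := by
        rintro rfl
        rw [vmv_zero_left] at hd
        exact hX₁A (sub_eq_zero.1 hd)
      refine ⟨⟨d, hdne⟩, MS_mem_iff_diff.2 ⟨i₁.1, hd⟩,
        ⟨vecMulVec d i₂.1 + A, ⟨d, rfl⟩, ⟨i₂.1, rfl⟩, vmv_add_ne hdne i₂.2.1⟩,
        ⟨vecMulVec d r + A, ?_, ⟨r, rfl⟩, vmv_add_ne hdne hr⟩⟩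
      rw [← hMA]
      exact ⟨d, rfl⟩
    · -- hneg from hcon
      intro i W hWmax hWsub hsame
      by_contra hne
      exact hcon ⟨NS i.1 A, W,
        fun h1 => absurd h1 (fun h1' => not_both hm0 hn h1' ((typetwo_iff hn0).2 ⟨r, A₀, hr, rfl⟩)),
        fun _ => (typetwo_iff hn0).2 ⟨i.1, A, i.2.1, rfl⟩,
        hRM i, hWmax, hWsub, hne, hsame⟩
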